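/- Let a_1, …, a_s be real numbers such that 1, a_1, …, a_s are linearly independent over ℚ. Let D ≥ 1 and b be integers, and let N = { b + kD : k ∈ ℕ } ∩ ℤ_{>0} be the corresponding arithmetic progression of positive integers. Then the set { ( ⟨p a_1⟩, ⟨p a_2⟩, …, ⟨p a_s⟩ ) : p ∈ N } is dense in the cube [0,1]^s. -/

import Mathlib

open MeasureTheory Set Function Filter Complex Submodule
open scoped Real Topology ComplexConjugate

instance my_fact_zero_lt_one_real : Fact ((0:ℝ) < 1) := ⟨one_pos⟩

noncomputable section KronAux

local notation "𝕋" => AddCircle (1 : ℝ)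

instance : IsProbabilityMeasure (volume : Measure 𝕋) :=
  ⟨by simp [AddCircle.measure_univ]⟩

lemma my_integral_fourier_eq_zero {n : ℤ} (hn : n ≠ 0) :
    ∫ x : 𝕋, fourier n x = 0 := by
  have h1 : ∫ x : 𝕋, fourier n (x + ((1/2/(n:ℝ) : ℝ) : 𝕋)) = ∫ x : 𝕋, fourier n x :=
    integral_add_right_eq_self _ _
  have h2 : ∀ x : 𝕋, fourier n (x + ((1/2/(n:ℝ) : ℝ) : 𝕋)) = - fourier n x := fun x => by
    simpa using fourier_add_half_inv_index hn one_pos x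
  simp only [h2, integral_neg] at h1
  have h3 : (∫ x : 𝕋, fourier n x) * 2 = 0 := by linear_combination - h1
  exact (mul_eq_zero.mp h3).resolve_right two_ne_zero

lemma my_integrable {X : Type*} [TopologicalSpace X] [CompactSpace X] [T2Space X]
    [MeasurableSpace X] [OpensMeasurableSpace X] {μ : Measure X} [IsFiniteMeasure μ]
    (f : C(X, ℂ)) : Integrable f μ :=
  f.continuous.integrable_of_hasCompactSupport (HasCompactSupport.of_compactSpace _)


variable {s : ℕ}

/-- Multidimensional Fourier character on the torus. -/
def tchar (m : Fin s → ℤ) : C(Fin s → 𝕋, ℂ) :=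
  ∏ i, (fourier (m i)).comp ⟨fun x => x i, continuous_apply i⟩

lemma tchar_apply (m : Fin s → ℤ) (x : Fin s → 𝕋) :
    tchar m x = ∏ i, fourier (m i) (x i) := by
  simp [tchar, ContinuousMap.prod_apply]

lemma tchar_zero : (tchar (0 : Fin s → ℤ)) = 1 := by
  ext x
  simp [tchar_apply, fourier_zero]

lemma tchar_add (m n : Fin s → ℤ) : tchar (m + n) = tchar m * tchar n := by
  ext x
  rw [ContinuousMap.mul_apply, tchar_apply, tchar_apply, tchar_apply, ← Finset.prod_mul_distrib]
  exact Finset.prod_congr rfl fun i _ => fourier_add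

lemma tchar_neg (m : Fin s → ℤ) : tchar (-m) = star (tchar m) := by
  ext x
  rw [ContinuousMap.star_apply, tchar_apply, tchar_apply, Complex.star_def, map_prod]
  exact Finset.prod_congr rfl fun i _ => fourier_neg


instance : IsProbabilityMeasure (volume : Measure (Fin s → 𝕋)) := by
  rw [show (volume : Measure (Fin s → 𝕋)) = Measure.pi (fun _ => volume) from rfl]
  infer_instance

lemma integral_tchar_ne (m : Fin s → ℤ) (hm : m ≠ 0) :
    ∫ x : Fin s → 𝕋, tchar m x = 0 := by
  simp only [tchar_apply]
  rw [show (volume : Measure (Fin s → 𝕋)) = Measure.pi (fun _ => volume) from rfl]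
  rw [integral_fintype_prod_eq_prod (ι := Fin s) (fun i (x : 𝕋) => fourier (m i) x)]
  obtain ⟨i, hi⟩ : ∃ i, m i ≠ 0 := by
    by_contra h
    push_neg at h
    exact hm (funext h)
  exact Finset.prod_eq_zero (Finset.mem_univ i) (my_integral_fourier_eq_zero hi)

lemma integral_tchar_zero' :
    ∫ x : Fin s → 𝕋, tchar (0 : Fin s → ℤ) x = 1 := by
  simp [tchar_zero]

/-- The star subalgebra generated by the characters. -/
def tsub (s : ℕ) : StarSubalgebra ℂ C(Fin s → 𝕋, ℂ) where
  toSubalgebra := Algebra.adjoin ℂ (Set.range (tchar (s := s)))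
  star_mem' := by
    show Algebra.adjoin ℂ (Set.range (tchar (s := s))) ≤
      star (Algebra.adjoin ℂ (Set.range (tchar (s := s))))
    refine Algebra.adjoin_le ?_
    rintro - ⟨n, rfl⟩
    exact Algebra.subset_adjoin ⟨-n, tchar_neg n⟩

lemma tsub_coe :
    Subalgebra.toSubmodule (tsub s).toSubalgebra = span ℂ (Set.range (tchar (s := s))) := by
  apply Algebra.adjoin_eq_span_of_subset
  refine Subset.trans ?_ Submodule.subset_span
  intro x hx
  refine Submonoid.closure_induction (fun _ => id) ⟨0, tchar_zero⟩ ?_ hx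
  rintro - - - - ⟨m, rfl⟩ ⟨n, rfl⟩
  exact ⟨m + n, tchar_add m n⟩

lemma tsub_sep : (tsub s).SeparatesPoints := by
  intro x y hxy
  obtain ⟨i, hi⟩ : ∃ i, x i ≠ y i := by
    by_contra h
    push_neg at h
    exact hxy (funext h)
  refine ⟨_, ⟨tchar (Pi.single i 1), Algebra.subset_adjoin ⟨_, rfl⟩, rfl⟩, ?_⟩
  have key : ∀ w : Fin s → 𝕋, tchar (Pi.single i 1) w = fourier 1 (w i) := by
    intro w
    rw [tchar_apply]
    rw [Finset.prod_eq_single i (fun j _ hj => by simp [Pi.single_eq_of_ne hj, fourier_zero])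
      (fun h => absurd (Finset.mem_univ i) h)]
    simp
  dsimp only
  rw [key, key, fourier_one, fourier_one]
  simp only [ne_eq, Circle.coe_inj]
  exact fun h => hi (AddCircle.injective_toCircle one_ne_zero h)

lemma tsub_closure_eq_top : (tsub s).topologicalClosure = ⊤ :=
  ContinuousMap.starSubalgebra_topologicalClosure_eq_top_of_separatesPoints _ tsub_sep


lemma theta_irrat {s : ℕ} {a : Fin s → ℝ}
    (hli : LinearIndependent ℚ (Fin.cons 1 a : Fin (s + 1) → ℝ))
    {m : Fin s → ℤ} (hm : m ≠ 0) (q : ℚ) :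
    (∑ i, (m i : ℝ) * a i) ≠ (q : ℝ) := by
  intro h
  rw [Fintype.linearIndependent_iff] at hli
  obtain ⟨i, hi⟩ : ∃ i, m i ≠ 0 := by
    by_contra hc
    push_neg at hc
    exact hm (funext hc)
  have h0 := hli (Fin.cons (-q) fun i => (m i : ℚ)) ?_ i.succ
  · rw [Fin.cons_succ] at h0
    exact hi (by exact_mod_cast h0)
  · rw [Fin.sum_univ_succ]
    simp only [Fin.cons_zero, Fin.cons_succ, Rat.smul_def]
    push_cast
    linear_combination h

lemma weyl_tendsto_zero {c r : ℂ} (hr1 : ‖r‖ = 1) (hrne : r ≠ 1) :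
    Tendsto (fun K : ℕ => (∑ k ∈ Finset.range K, c * r ^ k) / K) atTop (𝓝 0) := by
  have hrsub : (0:ℝ) < ‖r - 1‖ := by
    rw [norm_pos_iff]
    exact sub_ne_zero.mpr hrne
  have hb : ∀ K : ℕ, ‖(∑ k ∈ Finset.range K, c * r ^ k) / (K:ℂ)‖ ≤
      (‖c‖ * (2 / ‖r - 1‖)) * (1 / (K:ℝ)) := by
    intro K
    rw [← Finset.mul_sum, geom_sum_eq hrne, norm_div, norm_mul, norm_div]
    rw [Complex.norm_natCast]
    have h2 : ‖r ^ K - 1‖ ≤ 2 := by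
      calc ‖r ^ K - 1‖ ≤ ‖r ^ K‖ + ‖(1:ℂ)‖ := norm_sub_le _ _
        _ = 2 := by rw [norm_pow, hr1]; norm_num
    rcases Nat.eq_zero_or_pos K with h0 | hK
    · subst h0; simp
    calc ‖c‖ * (‖r ^ K - 1‖ / ‖r - 1‖) / K ≤ ‖c‖ * (2 / ‖r - 1‖) / K := by gcongr
      _ = ‖c‖ * (2 / ‖r - 1‖) * (1/(K:ℝ)) := by ring
  exact squeeze_zero_norm hb
    (by simpa using tendsto_one_div_atTop_nhds_zero_nat.const_mul (‖c‖ * (2 / ‖r - 1‖)))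


lemma tchar_val (m : Fin s → ℤ) (a : Fin s → ℝ) (t : ℝ) :
    tchar m (fun i => ((t * a i : ℝ) : 𝕋)) =
      Complex.exp (((2 * π * t * (∑ i, (m i : ℝ) * a i) : ℝ) : ℂ) * Complex.I) := by
  rw [tchar_apply]
  have h : ∀ i : Fin s, fourier (m i) (((t * a i : ℝ) : 𝕋)) =
      Complex.exp (((2 * π * t * ((m i : ℝ) * a i) : ℝ) : ℂ) * Complex.I) := by
    intro i
    rw [fourier_coe_apply]
    congr 1
    push_cast
    ring
  simp_rw [h, ← Complex.exp_sum]
  congr 1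
  rw [← Finset.sum_mul]
  congr 1
  push_cast
  rw [Finset.mul_sum]

lemma torus_dense {s : ℕ} {a : Fin s → ℝ}
    (hli : LinearIndependent ℚ (Fin.cons 1 a : Fin (s + 1) → ℝ))
    {D : ℕ} (hD : 1 ≤ D) (P0 : ℕ) (x : Fin s → 𝕋) :
    x ∈ closure (Set.range (fun (k : ℕ) (i : Fin s) =>
      ((((P0 + k * D : ℕ) : ℝ) * a i : ℝ) : 𝕋))) := by
  set z : ℕ → Fin s → 𝕋 := fun k i => ((((P0 + k * D : ℕ) : ℝ) * a i : ℝ) : 𝕋) with hz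
  by_contra hx
  -- Urysohn
  obtain ⟨f, hf0, hf1, hf01⟩ := exists_continuous_zero_one_of_isClosed
    (isClosed_closure (s := Set.range z)) isClosed_singleton
    (Set.disjoint_singleton_right.mpr hx)
  have hfc : Continuous f := f.continuous
  have hfint : Integrable (fun y => f y) (volume : Measure (Fin s → 𝕋)) :=
    hfc.integrable_of_hasCompactSupport (HasCompactSupport.of_compactSpace _)
  have hpos : 0 < ∫ y, f y := by
    rw [integral_pos_iff_support_of_nonneg (fun y => (hf01 y).1) hfint]
    have hUopen : IsOpen (f ⁻¹' Set.Ioi (0:ℝ)) := isOpen_Ioi.preimage hfc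
    have hxU : x ∈ f ⁻¹' Set.Ioi (0:ℝ) := by
      have : f x = 1 := hf1 rfl
      simp [this]
    refine lt_of_lt_of_le (hUopen.measure_pos volume ⟨x, hxU⟩) (measure_mono ?_)
    intro y hy
    exact ne_of_gt hy
  set F : C(Fin s → 𝕋, ℂ) := ⟨fun y => ((f y : ℝ) : ℂ), Complex.continuous_ofReal.comp hfc⟩
    with hF
  set ε : ℝ := (∫ y, f y) / 3 with hε
  have hεpos : 0 < ε := by positivity
  -- approximate F by an element of the character algebra
  have hFmem : F ∈ closure ((tsub s : Set C(Fin s → 𝕋, ℂ))) := by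
    have h1 : F ∈ (tsub s).topologicalClosure := by
      rw [tsub_closure_eq_top]; trivial
    exact h1
  obtain ⟨P, hPA, hPF⟩ := Metric.mem_closure_iff.mp hFmem ε hεpos
  have hPspan : P ∈ span ℂ (Set.range (tchar (s := s))) := by
    rw [← tsub_coe]
    exact hPA
  -- the Weyl limit on the span
  have main : ∀ g ∈ span ℂ (Set.range (tchar (s := s))),
      Tendsto (fun K : ℕ => (∑ k ∈ Finset.range K, g (z k)) / (K : ℂ)) atTop
        (𝓝 (∫ y, g y)) := by
    intro g hg
    induction hg using Submodule.span_induction with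
    | mem g hgm =>
      obtain ⟨m, rfl⟩ := hgm
      by_cases hm : m = 0
      · subst hm
        rw [integral_tchar_zero']
        have hval : ∀ k : ℕ, tchar (0 : Fin s → ℤ) (z k) = 1 := fun k => by
          rw [tchar_zero]; rfl
        refine Tendsto.congr' ?_ (tendsto_const_nhds (x := (1:ℂ)))
        filter_upwards [eventually_ge_atTop 1] with K hK
        simp only [hval, Finset.sum_const, Finset.card_range, nsmul_eq_mul, mul_one]
        have hK0 : (K:ℂ) ≠ 0 := by
          exact_mod_cast Nat.one_le_iff_ne_zero.mp hK
        rw [div_self hK0]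
      · rw [integral_tchar_ne m hm]
        set θ : ℝ := ∑ i, (m i : ℝ) * a i with hθ
        set r : ℂ := Complex.exp (((2 * π * D * θ : ℝ) : ℂ) * Complex.I) with hr
        set c : ℂ := Complex.exp (((2 * π * P0 * θ : ℝ) : ℂ) * Complex.I) with hc
        have hval : ∀ k : ℕ, tchar m (z k) = c * r ^ k := by
          intro k
          have := tchar_val m a ((P0 + k * D : ℕ) : ℝ)
          rw [hz]
          rw [this]
          rw [hc, hr, ← Complex.exp_nat_mul, ← Complex.exp_add]
          congr 1
          simp only [hθ]
          push_cast
          ring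
        have hr1 : ‖r‖ = 1 := by
          rw [hr, Complex.norm_exp_ofReal_mul_I]
        have hrne : r ≠ 1 := by
          intro hone
          rw [hr, Complex.exp_eq_one_iff] at hone
          obtain ⟨n, hn⟩ := hone
          have hID : ((2 * π * D * θ : ℝ) : ℂ) = (n : ℂ) * (2 * π) := by
            have hI : (Complex.I : ℂ) ≠ 0 := Complex.I_ne_zero
            field_simp at hn ⊢
            exact hn
          have hreal : 2 * π * D * θ = n * (2 * π) := by
            exact_mod_cast hID
          have hDθ : (D : ℝ) * θ = n := by
            have hπ : (π : ℝ) ≠ 0 := Real.pi_ne_zero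
            nlinarith [Real.pi_pos]
          have hq : θ = ((n / D : ℚ) : ℝ) := by
            have hD0 : (D : ℝ) ≠ 0 := by positivity
            push_cast
            field_simp
            linarith [hDθ]
          exact theta_irrat hli hm (n / D : ℚ) (hθ ▸ hq)
        simp only [hval]
        exact weyl_tendsto_zero hr1 hrne
    | zero => simp
    | add g h hg hh ihg ihh =>
      have hgi : Integrable (fun y => g y) (volume : Measure (Fin s → 𝕋)) := my_integrable g
      have hhi : Integrable (fun y => h y) (volume : Measure (Fin s → 𝕋)) := my_integrable h
      simp only [ContinuousMap.add_apply]
      rw [integral_add hgi hhi]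
      simp only [Finset.sum_add_distrib, add_div]
      exact ihg.add ihh
    | smul cc g hg ihg =>
      simp only [ContinuousMap.smul_apply, smul_eq_mul]
      rw [integral_const_mul]
      simp only [← Finset.mul_sum, mul_div_assoc]
      exact ihg.const_mul cc
  -- bound the averages of P
  have hFz : ∀ k : ℕ, F (z k) = 0 := by
    intro k
    have : f (z k) = 0 := hf0 (subset_closure ⟨k, rfl⟩)
    simp [hF, this]
  have hbound : ∀ K : ℕ, ‖(∑ k ∈ Finset.range K, P (z k)) / (K : ℂ)‖ ≤ dist F P := by
    intro K
    rcases Nat.eq_zero_or_pos K with h0 | hK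
    · subst h0; simp [dist_nonneg]
    rw [norm_div, Complex.norm_natCast]
    rw [div_le_iff₀ (by exact_mod_cast hK)]
    calc ‖∑ k ∈ Finset.range K, P (z k)‖ ≤ ∑ k ∈ Finset.range K, ‖P (z k)‖ :=
          norm_sum_le _ _
      _ ≤ ∑ k ∈ Finset.range K, dist F P := by
          refine Finset.sum_le_sum fun k _ => ?_
          have : ‖P (z k)‖ = dist (F (z k)) (P (z k)) := by
            rw [dist_eq_norm, hFz k, zero_sub, norm_neg]
          rw [this]
          exact ContinuousMap.dist_apply_le_dist _
      _ = dist F P * K := by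
          rw [Finset.sum_const, Finset.card_range, nsmul_eq_mul, mul_comm]
  have hintP : ‖∫ y, P y‖ ≤ dist F P := by
    have := main P hPspan
    exact le_of_tendsto' (this.norm) hbound
  have hintFP : ‖(∫ y, F y) - ∫ y, P y‖ ≤ dist F P := by
    rw [← integral_sub (my_integrable F) (my_integrable P)]
    have := norm_integral_le_of_norm_le_const (μ := (volume : Measure (Fin s → 𝕋)))
      (f := fun y => F y - P y) (C := dist F P)
      (Filter.Eventually.of_forall fun y => by
        calc ‖(fun y => F y - P y) y‖ = dist (F y) (P y) := by simp [dist_eq_norm]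
          _ ≤ dist F P := ContinuousMap.dist_apply_le_dist y)
    simpa using this
  have hFI : (∫ y, F y) = ((∫ y, f y : ℝ) : ℂ) := by
    rw [hF]
    exact integral_ofReal
  have h3ε : ‖(∫ y, F y)‖ = 3 * ε := by
    rw [hFI, Complex.norm_real, Real.norm_eq_abs, abs_of_pos hpos, hε]
    ring
  have : (3:ℝ) * ε ≤ dist F P + dist F P := by
    calc (3:ℝ) * ε = ‖(∫ y, F y)‖ := h3ε.symm
      _ ≤ ‖(∫ y, F y) - ∫ y, P y‖ + ‖∫ y, P y‖ := by
          simpa using norm_add_le ((∫ y, F y) - ∫ y, P y) (∫ y, P y)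
      _ ≤ dist F P + dist F P := add_le_add hintFP hintP
  have : (3:ℝ) * ε < 2 * ε := by
    calc (3:ℝ) * ε ≤ dist F P + dist F P := this
      _ < ε + ε := add_lt_add hPF hPF
      _ = 2 * ε := by ring
  linarith



set_option maxHeartbeats 1000000 in
/-- Kronecker's theorem along an arithmetic progression: if `1, a₁, …, a_s`
are linearly independent over `ℚ`, then the fractional parts `(⟨p a₁⟩, …, ⟨p a_s⟩)` for `p`
ranging over the positive integers of the form `b + kD` (`k ∈ ℕ`) are dense in `[0,1]^s`. -/
theorem stmt_6 (s : ℕ) (a : Fin s → ℝ)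
    (hli : LinearIndependent ℚ (Fin.cons 1 a : Fin (s + 1) → ℝ))
    (D : ℕ) (hD : 1 ≤ D) (b : ℤ) :
    Set.Icc (0 : Fin s → ℝ) 1 ⊆
      closure {v : Fin s → ℝ | ∃ p : ℕ, 0 < p ∧ (∃ k : ℕ, (p : ℤ) = b + k * D) ∧
        v = fun i => Int.fract ((p : ℝ) * a i)} := by
  intro v hv
  rw [Set.mem_Icc] at hv
  have hv0 : ∀ i, 0 ≤ v i := fun i => hv.1 i
  have hv1 : ∀ i, v i ≤ 1 := fun i => hv.2 i
  rw [Metric.mem_closure_iff]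
  intro ε hε
  set δ : ℝ := min (ε/2) (1/4) with hδ
  have hδpos : 0 < δ := lt_min (by linarith) (by norm_num)
  have hδ4 : δ ≤ 1/4 := min_le_right _ _
  have hδε : δ ≤ ε/2 := min_le_left _ _
  set w : Fin s → ℝ := fun i => min (max (v i) δ) (1 - δ) with hw
  have hwlo : ∀ i, δ ≤ w i := fun i => le_min (le_max_right _ _) (by linarith)
  have hwhi : ∀ i, w i ≤ 1 - δ := fun i => min_le_right _ _
  have hwv : ∀ i, |w i - v i| ≤ δ := by
    intro i
    rcases le_total (v i) δ with h | h
    · have h1 : max (v i) δ = δ := max_eq_right h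
      have h2 : w i = δ := by rw [hw]; simp only [h1]; exact min_eq_left (by linarith)
      rw [h2, _root_.abs_of_nonneg (by linarith [hv0 i])]
      linarith [hv0 i]
    · have h1 : max (v i) δ = v i := max_eq_left h
      rcases le_total (v i) (1 - δ) with h3 | h3
      · have h2 : w i = v i := by rw [hw]; simp only [h1]; exact min_eq_left h3
        rw [h2]; simp [hδpos.le]
      · have h2 : w i = 1 - δ := by rw [hw]; simp only [h1]; exact min_eq_right h3
        rw [h2, _root_.abs_of_nonpos (by linarith)]
        linarith [hv1 i]
  -- the arithmetic progression
  set k0 : ℕ := (1 - b).toNat with hk0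
  have hk0' : (1:ℤ) - b ≤ (k0:ℤ) := Int.self_le_toNat _
  have hDz : (1:ℤ) ≤ (D:ℤ) := by exact_mod_cast hD
  have hP0pos : 0 < b + (k0:ℤ) * D := by nlinarith [Int.natCast_nonneg k0]
  set P0 : ℕ := (b + (k0:ℤ) * D).toNat with hP0
  have hP0z : (P0 : ℤ) = b + (k0:ℤ) * D := Int.toNat_of_nonneg hP0pos.le
  -- apply density in the torus
  set t : Fin s → 𝕋 := fun i => ((w i : ℝ) : 𝕋) with ht
  have hdense := torus_dense hli hD P0 t
  rw [Metric.mem_closure_iff] at hdense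
  obtain ⟨y, hyrange, hyd⟩ := hdense (δ/2) (by linarith)
  obtain ⟨k, rfl⟩ := hyrange
  have hyd2 : ∀ j, dist (t j) ((((P0 + k * D : ℕ) : ℝ) * a j : ℝ) : 𝕋) < δ/2 := fun j =>
    lt_of_le_of_lt (dist_le_pi_dist t
      ((fun k i => ((((P0 + k * D : ℕ) : ℝ) * a i : ℝ) : 𝕋)) k) j) hyd
  obtain ⟨p, hp⟩ : ∃ p : ℕ, p = P0 + k * D := ⟨_, rfl⟩
  rw [← hp] at hyd2
  have hpposz : (0:ℤ) < (p : ℤ) := by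
    rw [hp]; push_cast; rw [hP0z]; nlinarith [Int.natCast_nonneg k]
  have hppos : 0 < p := by exact_mod_cast hpposz
  refine ⟨fun i => Int.fract ((p:ℝ) * a i), ⟨p, hppos, ⟨k0 + k, by rw [hp]; push_cast [hP0z]; ring⟩, rfl⟩, ?_⟩
  rw [dist_pi_lt_iff hε]
  intro i
  -- coordinatewise estimate
  have hdi : dist (t i) ((((p:ℕ):ℝ) * a i : ℝ) : 𝕋) < δ/2 := hyd2 i
  have hfract : ((((p:ℕ):ℝ) * a i : ℝ) : 𝕋) = ((Int.fract ((p:ℝ) * a i) : ℝ) : 𝕋) := by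
    rw [eq_comm, ← sub_eq_zero, ← AddCircle.coe_sub, AddCircle.coe_eq_zero_iff]
    exact ⟨-⌊(p:ℝ) * a i⌋, by rw [zsmul_eq_mul, Int.fract]; push_cast; ring⟩
  rw [hfract] at hdi
  set d : ℝ := w i - Int.fract ((p:ℝ) * a i) with hd
  have hdist : dist (t i) ((Int.fract ((p:ℝ) * a i) : ℝ) : 𝕋) = |d - round d| := by
    rw [dist_eq_norm, ht, ← AddCircle.coe_sub, AddCircle.norm_eq]
    norm_num
    rfl
  rw [hdist] at hdi
  have hdbound : |d| ≤ 1 - δ := by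
    have h1 : 0 ≤ Int.fract ((p:ℝ) * a i) := Int.fract_nonneg _
    have h2 : Int.fract ((p:ℝ) * a i) < 1 := Int.fract_lt_one _
    rw [abs_le]
    constructor
    · rw [hd]; linarith [hwlo i, hwhi i]
    · rw [hd]; linarith [hwlo i, hwhi i]
  have hround : round d = 0 := by
    by_contra hne
    have h2 : (1:ℝ) ≤ |(round d : ℝ)| := by exact_mod_cast Int.one_le_abs hne
    have h3 : |(round d : ℝ)| ≤ |d - round d| + |d| := by
      calc |(round d : ℝ)| = |(d - round d) * (-1) + d| := by congr 1; ring
        _ ≤ |(d - round d) * (-1)| + |d| := abs_add_le _ _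
        _ = |d - round d| + |d| := by rw [abs_mul]; simp
    have : (1:ℝ) ≤ δ/2 + (1 - δ) := by linarith
    linarith
  rw [hround] at hdi
  simp only [Int.cast_zero, sub_zero] at hdi
  have : dist (v i) (Int.fract ((p:ℝ) * a i)) < ε := by
    rw [Real.dist_eq]
    calc |v i - Int.fract ((p:ℝ) * a i)| ≤ |v i - w i| + |w i - Int.fract ((p:ℝ) * a i)| := by
          have := abs_add_le (v i - w i) (w i - Int.fract ((p:ℝ) * a i))
          simpa using this
      _ = |w i - v i| + |d| := by rw [abs_sub_comm (v i), hd]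
      _ < δ + δ/2 := by
          have := hwv i
          linarith
      _ < ε := by linarith
  exact this

end KronAux
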